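/- Let p > 1, n ≥ 1, D > 0, and j ≥ 1. Define ψ(x,t) = j((p-1)/p)|x|^{p/(p-1)} + j^{p-1}(n/(2D)) t². Then for all x ≠ 0 and all t with |t| ≤ D: ∂_t ψ(x,t) - Δ_p ψ(x,t) = j^{p-1} n t/D - j^{p-1} n ≤ 0, i.e. ψ is a classical subsolution of the p-parabolic equation on {(x,t) : x ≠ 0, |t| ≤ D}. -/

import Mathlib

open InnerProductSpace

lemma aux_grad {m : ℕ} (p c : ℝ) (hp : 1 < p) (C : ℝ) (y : EuclideanSpace ℝ (Fin m))
    (hy : y ≠ 0) :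
    HasGradientAt (fun z : EuclideanSpace ℝ (Fin m) => c * ‖z‖ ^ (p / (p - 1)) + C)
      ((c * (p / (p - 1)) * ‖y‖ ^ ((2 - p) / (p - 1))) • y) y := by
  have hy' : (0:ℝ) < ‖y‖ := norm_pos_iff.mpr hy
  have hp1 : p - 1 ≠ 0 := by linarith
  set α := p / (p - 1) with hα
  have h1 : HasFDerivAt (fun z : EuclideanSpace ℝ (Fin m) => ‖z‖ ^ 2)
      (2 • innerSL ℝ y) y := (hasStrictFDerivAt_norm_sq y).hasFDerivAt
  have h2 : HasDerivAt (fun s : ℝ => c * s ^ (α / 2) + C)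
      (c * ((α / 2) * (‖y‖ ^ 2) ^ (α / 2 - 1))) (‖y‖ ^ 2) := by
    have := ((Real.hasDerivAt_rpow_const (x := ‖y‖ ^ 2) (p := α / 2)
      (Or.inl (by positivity))).const_mul c).add_const C
    simpa [mul_assoc] using this
  have h3 := h2.comp_hasFDerivAt y h1
  have hfun : (fun z : EuclideanSpace ℝ (Fin m) => c * ‖z‖ ^ (p / (p - 1)) + C)
      = (fun s : ℝ => c * s ^ (α / 2) + C) ∘ (fun z : EuclideanSpace ℝ (Fin m) => ‖z‖ ^ 2) := by
    funext z
    have : ((‖z‖ ^ 2 : ℝ)) ^ (α / 2) = ‖z‖ ^ α := by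
      rw [← Real.rpow_natCast ‖z‖ 2, ← Real.rpow_mul (norm_nonneg z)]
      congr 1
      push_cast
      ring
    rw [Function.comp_apply, this]
  rw [hasGradientAt_iff_hasFDerivAt, hfun]
  refine h3.congr_fderiv ?_
  have hpow : ((‖y‖ ^ 2 : ℝ)) ^ (α / 2 - 1) = ‖y‖ ^ ((2 - p) / (p - 1)) := by
    rw [← Real.rpow_natCast ‖y‖ 2, ← Real.rpow_mul (norm_nonneg y)]
    congr 1
    push_cast
    rw [hα]
    field_simp
    ring
  ext w
  simp [InnerProductSpace.toDual_apply_apply, real_inner_smul_left, hpow]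
  ring

/-- The nonlinear vector field `|∇u|^{p-2} ∇u` of a scalar function. -/
noncomputable def pField (p : ℝ) {n : ℕ} (u : EuclideanSpace ℝ (Fin n) → ℝ)
    (x : EuclideanSpace ℝ (Fin n)) : EuclideanSpace ℝ (Fin n) :=
  ‖gradient u x‖ ^ (p - 2) • gradient u x

/-- The `p`-Laplacian `Δ_p u(x) = div(|∇u|^{p-2}∇u)(x)`. -/
noncomputable def pLaplacian (p : ℝ) {n : ℕ} (u : EuclideanSpace ℝ (Fin n) → ℝ)
    (x : EuclideanSpace ℝ (Fin n)) : ℝ :=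
  ∑ i, fderiv ℝ (pField p u) x (EuclideanSpace.single i 1) i

lemma aux_pField {m : ℕ} (p j : ℝ) (hp : 1 < p) (hj : 0 < j) (C : ℝ)
    (y : EuclideanSpace ℝ (Fin m)) (hy : y ≠ 0) :
    pField p (fun z => j * ((p - 1) / p) * ‖z‖ ^ (p / (p - 1)) + C) y = (j ^ (p - 1)) • y := by
  have hy' : (0:ℝ) < ‖y‖ := norm_pos_iff.mpr hy
  have hp0 : (0:ℝ) < p := by linarith
  have hp1 : p - 1 ≠ 0 := by linarith
  have hgrad : gradient (fun z : EuclideanSpace ℝ (Fin m) =>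
      j * ((p - 1) / p) * ‖z‖ ^ (p / (p - 1)) + C) y = (j * ‖y‖ ^ ((2 - p) / (p - 1))) • y := by
    have := (aux_grad p (j * ((p - 1) / p)) hp C y hy).gradient
    rw [this]
    congr 1
    field_simp
  rw [pField, hgrad, smul_smul, norm_smul]
  congr 1
  have hs : (0:ℝ) < ‖y‖ ^ ((2 - p) / (p - 1)) := Real.rpow_pos_of_pos hy' _
  rw [Real.norm_eq_abs, abs_of_pos (by positivity)]
  have h1 : j * ‖y‖ ^ ((2 - p) / (p - 1)) * ‖y‖ = j * ‖y‖ ^ (1 / (p - 1)) := by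
    rw [mul_assoc, ← Real.rpow_add_one (ne_of_gt hy')]
    congr 2
    field_simp
    norm_num
  rw [h1, Real.mul_rpow hj.le (Real.rpow_nonneg hy'.le _), ← Real.rpow_mul hy'.le]
  have e1 : j ^ (p - 2) * ‖y‖ ^ (1 / (p - 1) * (p - 2)) * (j * ‖y‖ ^ ((2 - p) / (p - 1)))
      = (j ^ (p - 2) * j ^ (1 : ℝ)) * (‖y‖ ^ (1 / (p - 1) * (p - 2)) * ‖y‖ ^ ((2 - p) / (p - 1))) := by
    rw [Real.rpow_one]; ring
  rw [e1, ← Real.rpow_add hj, ← Real.rpow_add hy']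
  have e2 : 1 / (p - 1) * (p - 2) + (2 - p) / (p - 1) = 0 := by field_simp; ring
  rw [e2, Real.rpow_zero, mul_one]
  congr 1
  ring

theorem stmt18 (p : ℝ) (hp : 1 < p) (n : ℕ) (hn : 1 ≤ n)
    (D j : ℝ) (hD : 0 < D) (hj : 1 ≤ j)
    (ψ : EuclideanSpace ℝ (Fin n) → ℝ → ℝ)
    (hψ : ∀ x t, ψ x t =
      j * ((p - 1) / p) * ‖x‖ ^ (p / (p - 1)) + j ^ (p - 1) * (n / (2 * D)) * t ^ 2)
    (x : EuclideanSpace ℝ (Fin n)) (hx : x ≠ 0) (t : ℝ) (ht : |t| ≤ D) :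
    deriv (ψ x) t - pLaplacian p (fun y => ψ y t) x = j ^ (p - 1) * n * t / D - j ^ (p - 1) * n ∧
    j ^ (p - 1) * n * t / D - j ^ (p - 1) * n ≤ 0 := by
  have hj0 : (0:ℝ) < j := by linarith
  have hjp : (0:ℝ) < j ^ (p - 1) := Real.rpow_pos_of_pos hj0 _
  set A := j * ((p - 1) / p) * ‖x‖ ^ (p / (p - 1)) with hA
  set B := j ^ (p - 1) * ((n : ℝ) / (2 * D)) with hB
  -- time derivative
  have hψx : ψ x = fun s => A + B * s ^ 2 := funext fun s => hψ x s
  have hd : deriv (ψ x) t = B * (2 * t) := by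
    rw [hψx]
    have : HasDerivAt (fun s : ℝ => A + B * s ^ 2) (B * (2 * t)) t := by
      have := ((hasDerivAt_pow 2 t).const_mul B).const_add A
      simpa [mul_comm] using this
    exact this.deriv
  -- spatial part
  have hu : (fun y : EuclideanSpace ℝ (Fin n) => ψ y t)
      = fun y => j * ((p - 1) / p) * ‖y‖ ^ (p / (p - 1)) + B * t ^ 2 :=
    funext fun y => hψ y t
  have hev : (fun y => pField p (fun z : EuclideanSpace ℝ (Fin n) => ψ z t) y)
      =ᶠ[nhds x] fun y => (j ^ (p - 1)) • y := by
    filter_upwards [IsOpen.mem_nhds isOpen_compl_singleton hx] with y hy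
    rw [hu]
    exact aux_pField p j hp hj0 (B * t ^ 2) y hy
  have hfd : fderiv ℝ (pField p (fun z : EuclideanSpace ℝ (Fin n) => ψ z t)) x
      = (j ^ (p - 1)) • ContinuousLinearMap.id ℝ (EuclideanSpace ℝ (Fin n)) := by
    rw [Filter.EventuallyEq.fderiv_eq hev]
    exact ((hasFDerivAt_id x).const_smul (j ^ (p - 1))).fderiv
  have hlap : pLaplacian p (fun y => ψ y t) x = (n : ℝ) * j ^ (p - 1) := by
    rw [pLaplacian]
    simp only [hfd]
    simp [EuclideanSpace.single_apply, Finset.sum_const, Finset.card_univ, mul_comm]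
  constructor
  · rw [hd, hlap, hB]
    field_simp
  · have ht2 : t ≤ D := (abs_le.mp ht).2
    have hn0 : (0:ℝ) ≤ n := Nat.cast_nonneg n
    have h2 : j ^ (p - 1) * n * t / D ≤ j ^ (p - 1) * n := by
      rw [div_le_iff₀ hD]
      nlinarith [mul_nonneg (mul_nonneg hjp.le hn0) (sub_nonneg.mpr ht2)]
    linarith
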